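/- Let P be an N×N real orthogonal matrix with det(P) = 1 and u ⊆ {1,...,N} with complement ū. Then det(P_{uu}) = det(P_{ūū}), where P_{uu} and P_{ūū} are the principal submatrices of P with rows and columns indexed by u and by ū respectively (Jacobi's identity for orthogonal matrices of determinant one). -/

import Mathlib

open Matrix BigOperators

/-- Jacobi's identity for an orthogonal matrix of determinant one: complementary principal
minors are equal, `det(P_{uu}) = det(P_{ūū})`. -/
theorem jacobi_identity_orthogonal (N : ℕ)
    (P : Matrix (Fin N) (Fin N) ℝ)
    (horth : P * Pᵀ = 1)
    (hdet : P.det = 1)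
    (u : Finset (Fin N)) :
    Matrix.det (P.submatrix
        (fun i : {i // i ∈ u} => (i : Fin N)) (fun i : {i // i ∈ u} => (i : Fin N)))
      = Matrix.det (P.submatrix
        (fun i : {i // i ∈ uᶜ} => (i : Fin N)) (fun i : {i // i ∈ uᶜ} => (i : Fin N))) := by
  classical
  set α := {i // i ∈ u}
  set β := {i // i ∈ uᶜ}
  let e : α ⊕ β ≃ Fin N :=
    { toFun := Sum.elim (fun i => (i : Fin N)) (fun i => (i : Fin N))
      invFun := fun i => if h : i ∈ u then Sum.inl ⟨i, h⟩ else Sum.inr ⟨i, by simpa using h⟩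
      left_inv := by
        rintro (⟨i, hi⟩ | ⟨i, hi⟩)
        · simp [hi]
        · simp only [Sum.elim_inr]
          exact dif_neg (by simpa using hi)
      right_inv := by intro i; by_cases h : i ∈ u <;> simp [h] }
  set Q := P.submatrix e e with hQ
  have hQorth : Q * Qᵀ = 1 := by
    rw [hQ, transpose_submatrix, submatrix_mul_equiv, horth]
    ext i j
    simp [one_apply, Equiv.apply_eq_iff_eq]
  have hQdet : Q.det = 1 := by
    rw [hQ, det_submatrix_equiv_self, hdet]
  set A := Q.toBlocks₁₁
  set B := Q.toBlocks₁₂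
  set C := Q.toBlocks₂₁
  set D := Q.toBlocks₂₂
  have hQblocks : Q = fromBlocks A B C D := (fromBlocks_toBlocks Q).symm
  have horth' : fromBlocks (A * Aᵀ + B * Bᵀ) (A * Cᵀ + B * Dᵀ)
      (C * Aᵀ + D * Bᵀ) (C * Cᵀ + D * Dᵀ) = fromBlocks 1 0 0 1 := by
    rw [← fromBlocks_multiply, ← fromBlocks_transpose, ← hQblocks, hQorth, fromBlocks_one]
  have h12 : A * Cᵀ + B * Dᵀ = 0 := congrArg Matrix.toBlocks₁₂ horth'
  have h22 : C * Cᵀ + D * Dᵀ = 1 := congrArg Matrix.toBlocks₂₂ horth'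
  have key : Q * fromBlocks 1 Cᵀ 0 Dᵀ = fromBlocks A 0 C 1 := by
    rw [hQblocks, fromBlocks_multiply]
    congr 1 <;> simp [h12, h22, Matrix.mul_one, Matrix.mul_zero]
  have hdets := congrArg Matrix.det key
  simp only [det_mul, hQdet, det_fromBlocks_zero₂₁, det_fromBlocks_zero₁₂, det_one,
    one_mul, mul_one, det_transpose] at hdets
  -- hdets : D.det = A.det
  have hA : A = P.submatrix (fun i : α => (i : Fin N)) (fun i : α => (i : Fin N)) := by
    ext i j; rfl
  have hD : D = P.submatrix (fun i : β => (i : Fin N)) (fun i : β => (i : Fin N)) := by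
    ext i j; rfl
  rw [← hA, ← hD]; exact hdets.symm
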